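/- For the Saint-Venant-Exner EC fluctuation, under lake-at-rest conditions (hv = 0, h + b constant, h_b = 0, q_b = 0) the fluctuations D±_EC(u_L,u_R) = B̄±⟦v⟧ ± (f± − f*) with f* = (⟨hv⟩, ⟨hv⟩⟨v⟩, ⟨q_b⟩)ᵀ, B̄⁻ = ½B(u_L), B̄⁺ = ½B(u_R), and B(u) having single nonzero row (g(h+h_b), 0, g(h + h_b/r)), vanish identically: the momentum component reduces to (g/2) h_{L,R} ⟦h + b⟧ = 0 and all other components are zero. -/
import Mathlib


open Matrix

theorem sve_ec_fluctuation_well_balanced (g r : ℝ) (hr : r ≠ 0)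
    (qb hb : (Fin 3 → ℝ) → ℝ)
    -- SVE flux, nonconservative matrix, auxiliary variables, central flux
    (f : (Fin 3 → ℝ) → (Fin 3 → ℝ))
    (hf : ∀ u, f u = ![u 1, u 1 * (u 1 / u 0), qb u])
    (B : (Fin 3 → ℝ) → Matrix (Fin 3) (Fin 3) ℝ)
    (hB : ∀ u, B u = Matrix.of
      ![![0, 0, 0], ![g * (u 0 + hb u), 0, g * (u 0 + hb u / r)], ![0, 0, 0]])
    (vmap : (Fin 3 → ℝ) → (Fin 3 → ℝ))
    (hv : ∀ u, vmap u = ![u 0, hb u, u 2])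
    (fstar : (Fin 3 → ℝ) → (Fin 3 → ℝ) → (Fin 3 → ℝ))
    (hfstar : ∀ a b, fstar a b =
      ![(a 1 + b 1) / 2, ((a 1 + b 1) / 2) * ((a 1 / a 0 + b 1 / b 0) / 2),
        (qb a + qb b) / 2])
    -- lake-at-rest conditions
    (uL uR : Fin 3 → ℝ)
    (hmomL : uL 1 = 0) (hmomR : uR 1 = 0)
    (hlevel : uL 0 + uL 2 = uR 0 + uR 2)
    (hhbL : hb uL = 0) (hhbR : hb uR = 0)
    (hqbL : qb uL = 0) (hqbR : qb uR = 0) :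
    ((1 / 2 : ℝ) • B uL).mulVec (vmap uR - vmap uL) -
        (f uL - fstar uL uR) = 0 ∧
    ((1 / 2 : ℝ) • B uR).mulVec (vmap uR - vmap uL) +
        (f uR - fstar uL uR) = 0 := by
  constructor <;> funext i <;> fin_cases i <;>
    simp [hB, hv, hf, hfstar, hmomL, hmomR, hhbL, hhbR, hqbL, hqbR,
      mulVec, dotProduct, Fin.sum_univ_three] <;>
    first
      | rfl
      | linear_combination (-(2⁻¹) * (g * uL 0)) * hlevel
      | linear_combination (-(2⁻¹) * (g * uR 0)) * hlevel
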